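/- Let E₁, E₂ ⊆ ℝⁿ be origin-centered ellipsoids. If there exists a dense set T of directions in S^{n-1} such that for every u ∈ T the midpoints of chords of E₁ parallel to u and the midpoints of chords of E₂ parallel to u lie in one common hyperplane, then there exists r > 0 such that E₁ = r·E₂. -/

import Mathlib

open Set Pointwise

/-- The midpoints of all chords of `K` parallel to `u` lie in the affine
hyperplane `{y | ⟪v, y⟫ = c}`. -/
def chordMidpointsIn {n : ℕ} (K : Set (EuclideanSpace ℝ (Fin n)))
    (u v : EuclideanSpace ℝ (Fin n)) (c : ℝ) : Prop :=
  ∀ x : EuclideanSpace ℝ (Fin n), {s : ℝ | x + s • u ∈ K}.Nonempty →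
    (inner ℝ v (x + (((sInf {s : ℝ | x + s • u ∈ K}) +
        (sSup {s : ℝ | x + s • u ∈ K})) / 2) • u) : ℝ) = c

namespace Stmt9Aux

variable {n : ℕ}

noncomputable def g (L : EuclideanSpace ℝ (Fin n) ≃ₗ[ℝ] EuclideanSpace ℝ (Fin n))
    (a b : EuclideanSpace ℝ (Fin n)) : ℝ := inner ℝ (L.symm a) (L.symm b)

lemma g_symm (L : EuclideanSpace ℝ (Fin n) ≃ₗ[ℝ] EuclideanSpace ℝ (Fin n)) (a b) :
    g L a b = g L b a := real_inner_comm _ _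

lemma g_smul_left (L : EuclideanSpace ℝ (Fin n) ≃ₗ[ℝ] EuclideanSpace ℝ (Fin n)) (c : ℝ) (a b) :
    g L (c • a) b = c * g L a b := by
  unfold g; rw [map_smul, real_inner_smul_left]

lemma g_smul_right (L : EuclideanSpace ℝ (Fin n) ≃ₗ[ℝ] EuclideanSpace ℝ (Fin n)) (c : ℝ) (a b) :
    g L a (c • b) = c * g L a b := by
  unfold g; rw [map_smul, real_inner_smul_right]

lemma g_zero_right (L : EuclideanSpace ℝ (Fin n) ≃ₗ[ℝ] EuclideanSpace ℝ (Fin n)) (a) :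
    g L a 0 = 0 := by unfold g; rw [map_zero, inner_zero_right]

lemma g_add_right (L : EuclideanSpace ℝ (Fin n) ≃ₗ[ℝ] EuclideanSpace ℝ (Fin n)) (a b c) :
    g L a (b + c) = g L a b + g L a c := by
  unfold g; rw [map_add, inner_add_right]

lemma g_self_eq (L : EuclideanSpace ℝ (Fin n) ≃ₗ[ℝ] EuclideanSpace ℝ (Fin n)) (a) :
    g L a a = ‖L.symm a‖ ^ 2 := by
  unfold g; rw [real_inner_self_eq_norm_sq]

lemma g_self_pos (L : EuclideanSpace ℝ (Fin n) ≃ₗ[ℝ] EuclideanSpace ℝ (Fin n)) {a}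
    (ha : a ≠ 0) : 0 < g L a a := by
  rw [g_self_eq]
  have : L.symm a ≠ 0 := by simpa using ha
  exact pow_pos (norm_pos_iff.2 this) 2

lemma g_cont (L : EuclideanSpace ℝ (Fin n) ≃ₗ[ℝ] EuclideanSpace ℝ (Fin n)) :
    Continuous fun p : EuclideanSpace ℝ (Fin n) × EuclideanSpace ℝ (Fin n) => g L p.1 p.2 := by
  have hc : Continuous (L.symm : EuclideanSpace ℝ (Fin n) → EuclideanSpace ℝ (Fin n)) :=
    LinearMap.continuous_of_finiteDimensional L.symm.toLinearMap
  exact Continuous.inner (hc.comp continuous_fst) (hc.comp continuous_snd)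

lemma mem_ell (L : EuclideanSpace ℝ (Fin n) ≃ₗ[ℝ] EuclideanSpace ℝ (Fin n))
    (y : EuclideanSpace ℝ (Fin n)) :
    y ∈ (L : EuclideanSpace ℝ (Fin n) → EuclideanSpace ℝ (Fin n)) '' Metric.closedBall 0 1 ↔
      ‖L.symm y‖ ≤ 1 := by
  constructor
  · rintro ⟨x, hx, rfl⟩
    simpa [mem_closedBall_zero_iff] using hx
  · intro h
    exact ⟨L.symm y, by simpa [mem_closedBall_zero_iff] using h, L.apply_symm_apply y⟩

lemma chord_sum (L : EuclideanSpace ℝ (Fin n) ≃ₗ[ℝ] EuclideanSpace ℝ (Fin n))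
    {u : EuclideanSpace ℝ (Fin n)} (hu : u ≠ 0) (x : EuclideanSpace ℝ (Fin n))
    (hx : ‖L.symm x‖ ≤ 1) :
    sInf {s : ℝ | x + s • u ∈
        (L : EuclideanSpace ℝ (Fin n) → EuclideanSpace ℝ (Fin n)) '' Metric.closedBall 0 1}
    + sSup {s : ℝ | x + s • u ∈
        (L : EuclideanSpace ℝ (Fin n) → EuclideanSpace ℝ (Fin n)) '' Metric.closedBall 0 1}
    = -2 * g L u x / g L u u := by
  set y := L.symm x with hy
  set z := L.symm u with hz
  have hzne : z ≠ 0 := by simpa [hz] using hu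
  have hznorm : (0:ℝ) < ‖z‖ := norm_pos_iff.2 hzne
  have hz2 : (0:ℝ) < ‖z‖^2 := pow_pos hznorm 2
  set S := {s : ℝ | x + s • u ∈
      (L : EuclideanSpace ℝ (Fin n) → EuclideanSpace ℝ (Fin n)) '' Metric.closedBall 0 1}
    with hS
  have hmem : ∀ s : ℝ, s ∈ S ↔ ‖y + s • z‖ ≤ 1 := by
    intro s
    rw [hS, mem_setOf_eq, mem_ell]
    rw [map_add, map_smul]
  set b : ℝ := inner ℝ z y with hb
  set m : ℝ := -b / ‖z‖^2 with hm
  have hsq : ∀ t : ℝ, ‖y + t • z‖^2 = ‖y‖^2 + 2*t*b + t^2*‖z‖^2 := by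
    intro t
    rw [norm_add_sq_real, real_inner_smul_right, norm_smul, hb, real_inner_comm]
    simp [mul_pow, Real.norm_eq_abs, sq_abs]
    ring
  have hrefl : ∀ s, s ∈ S → 2*m - s ∈ S := by
    intro s hs
    rw [hmem] at hs ⊢
    have h1 : ‖y + (2*m - s) • z‖^2 = ‖y + s • z‖^2 := by
      rw [hsq, hsq, hm]
      field_simp
      ring
    nlinarith [norm_nonneg (y + (2*m-s) • z), norm_nonneg (y + s • z)]
  have hne : S.Nonempty := ⟨0, by rw [hmem]; simpa using hx⟩
  have habs : ∀ s ∈ S, |s| ≤ (1 + ‖y‖)/‖z‖ := by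
    intro s hs
    rw [hmem] at hs
    rw [le_div_iff₀ hznorm]
    calc |s| * ‖z‖ = ‖s • z‖ := by rw [norm_smul, Real.norm_eq_abs]
      _ = ‖(y + s • z) - y‖ := by congr 1; abel
      _ ≤ ‖y + s • z‖ + ‖y‖ := norm_sub_le _ _
      _ ≤ 1 + ‖y‖ := by linarith
  have hba : BddAbove S := ⟨(1 + ‖y‖)/‖z‖, fun s hs => (le_abs_self s).trans (habs s hs)⟩
  have hbb : BddBelow S := ⟨-((1 + ‖y‖)/‖z‖), fun s hs => by
    have := habs s hs; have := neg_abs_le s; linarith⟩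
  have h1 : sSup S ≤ 2*m - sInf S := csSup_le hne (fun s hs => by
    have := csInf_le hbb (hrefl s hs); linarith)
  have h2 : 2*m - sSup S ≤ sInf S := le_csInf hne (fun s hs => by
    have := le_csSup hba (hrefl s hs); linarith)
  have hsum : sInf S + sSup S = 2*m := by linarith
  rw [hsum, hm, g_self_eq]
  have hgux : g L u x = b := rfl
  rw [hgux, ← hz]
  ring

lemma key (L : EuclideanSpace ℝ (Fin n) ≃ₗ[ℝ] EuclideanSpace ℝ (Fin n))
    {u v : EuclideanSpace ℝ (Fin n)} {c : ℝ} (hu : u ≠ 0)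
    (h : chordMidpointsIn
      ((L : EuclideanSpace ℝ (Fin n) → EuclideanSpace ℝ (Fin n)) '' Metric.closedBall 0 1)
      u v c) :
    c = 0 ∧ ∀ w, (inner ℝ v w : ℝ) * g L u u = (inner ℝ v u : ℝ) * g L u w := by
  have hguu : 0 < g L u u := g_self_pos L hu
  have hc : c = 0 := by
    have h0 := h 0 ⟨0, by rw [mem_setOf_eq, mem_ell]; simp⟩
    rw [chord_sum L hu 0 (by simp)] at h0
    rw [g_zero_right] at h0
    simpa using h0.symm
  refine ⟨hc, fun w => ?_⟩
  by_cases hw : w = 0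
  · simp [hw, g_zero_right, inner_zero_right]
  · have hLw : L.symm w ≠ 0 := by simpa using hw
    set t : ℝ := ‖L.symm w‖⁻¹ with htdef
    have ht : 0 < t := inv_pos.2 (norm_pos_iff.2 hLw)
    have hx : ‖L.symm (t • w)‖ ≤ 1 := by
      rw [map_smul, norm_smul, Real.norm_eq_abs, abs_of_pos ht, htdef,
        inv_mul_cancel₀ (norm_ne_zero_iff.2 hLw)]
    have hne : {s : ℝ | t • w + s • u ∈
        (L : EuclideanSpace ℝ (Fin n) → EuclideanSpace ℝ (Fin n)) ''
          Metric.closedBall 0 1}.Nonempty :=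
      ⟨0, by rw [mem_setOf_eq, mem_ell]; simpa using hx⟩
    have hk := h (t • w) hne
    rw [chord_sum L hu (t • w) hx, hc, g_smul_right, inner_add_right,
      real_inner_smul_right, real_inner_smul_right] at hk
    have ht' : t ≠ 0 := ne_of_gt ht
    have hguu' : g L u u ≠ 0 := ne_of_gt hguu
    set p : ℝ := (inner ℝ v w : ℝ) with hp
    set q : ℝ := (inner ℝ v u : ℝ) with hq
    set G : ℝ := g L u w with hG
    set Guu : ℝ := g L u u with hGuu
    have h2 : t * (p * Guu) = t * (q * G) := by
      field_simp at hk
      linear_combination hk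
    exact mul_left_cancel₀ ht' h2

end Stmt9Aux

open Stmt9Aux in
/-- Two origin-centered ellipsoids whose chord-midpoint hyperplanes coincide
for a dense set of directions are dilates of each other. -/
theorem stmt9 {n : ℕ}
    (L₁ L₂ : EuclideanSpace ℝ (Fin n) ≃ₗ[ℝ] EuclideanSpace ℝ (Fin n))
    (T : Set (EuclideanSpace ℝ (Fin n)))
    (hT : T ⊆ Metric.sphere (0 : EuclideanSpace ℝ (Fin n)) 1)
    (hdense : Metric.sphere (0 : EuclideanSpace ℝ (Fin n)) 1 ⊆ closure T)
    (hmid : ∀ u ∈ T, ∃ v : EuclideanSpace ℝ (Fin n), ∃ c : ℝ, v ≠ 0 ∧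
      chordMidpointsIn ((L₁ : EuclideanSpace ℝ (Fin n) → EuclideanSpace ℝ (Fin n)) ''
        Metric.closedBall 0 1) u v c ∧
      chordMidpointsIn ((L₂ : EuclideanSpace ℝ (Fin n) → EuclideanSpace ℝ (Fin n)) ''
        Metric.closedBall 0 1) u v c) :
    ∃ r : ℝ, 0 < r ∧
      (L₁ : EuclideanSpace ℝ (Fin n) → EuclideanSpace ℝ (Fin n)) ''
          Metric.closedBall 0 1 =
        r • ((L₂ : EuclideanSpace ℝ (Fin n) → EuclideanSpace ℝ (Fin n)) ''
          Metric.closedBall 0 1) := by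
  classical
  rcases Nat.eq_zero_or_pos n with hn | hn
  · -- trivial case: the space is a subsingleton
    subst hn
    refine ⟨1, one_pos, ?_⟩
    have hsub : ∀ x : EuclideanSpace ℝ (Fin 0), x = 0 := fun x =>
      Subsingleton.elim x 0
    have h1 : ∀ (L : EuclideanSpace ℝ (Fin 0) ≃ₗ[ℝ] EuclideanSpace ℝ (Fin 0)),
        (L : EuclideanSpace ℝ (Fin 0) → EuclideanSpace ℝ (Fin 0)) ''
          Metric.closedBall 0 1 = univ := by
      intro L
      apply eq_univ_of_forall
      intro y
      exact ⟨L.symm y, by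
        rw [mem_closedBall_zero_iff, hsub (L.symm y), norm_zero]; norm_num,
        L.apply_symm_apply y⟩
    rw [h1 L₁, h1 L₂, one_smul]
  -- main case
  -- Step 1: the proportionality identity on T
  have hP : ∀ u ∈ T, ∀ w, g L₂ u u * g L₁ u w = g L₁ u u * g L₂ u w := by
    intro u hu w
    have hu0 : u ≠ 0 := by
      intro h0
      have := hT hu
      rw [h0, Metric.mem_sphere, dist_self] at this
      norm_num at this
    obtain ⟨v, c, hv, hm1, hm2⟩ := hmid u hu
    obtain ⟨-, k1⟩ := key L₁ hu0 hm1
    obtain ⟨-, k2⟩ := key L₂ hu0 hm2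
    have hvu : (inner ℝ v u : ℝ) ≠ 0 := by
      intro h0
      apply hv
      have hvz : ∀ w', (inner ℝ v w' : ℝ) = 0 := by
        intro w'
        have := k1 w'
        rw [h0, zero_mul] at this
        have hg := ne_of_gt (g_self_pos L₁ hu0)
        exact (mul_eq_zero.1 this).resolve_right hg
      have := hvz v
      rw [real_inner_self_eq_norm_sq] at this
      simpa using pow_eq_zero_iff (n := 2) (by norm_num) |>.1 this
    have h2 : (inner ℝ v u : ℝ) * (g L₂ u u * g L₁ u w)
        = (inner ℝ v u : ℝ) * (g L₁ u u * g L₂ u w) := by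
      linear_combination g L₁ u u * k2 w - g L₂ u u * k1 w
    exact mul_left_cancel₀ hvu h2
  -- Step 2: extend to the whole sphere by continuity
  have hPsphere : ∀ u ∈ Metric.sphere (0 : EuclideanSpace ℝ (Fin n)) 1,
      ∀ w, g L₂ u u * g L₁ u w = g L₁ u u * g L₂ u w := by
    intro u hu w
    have hCw : IsClosed {a : EuclideanSpace ℝ (Fin n) |
        g L₂ a a * g L₁ a w = g L₁ a a * g L₂ a w} := by
      apply isClosed_eq
      · exact ((g_cont L₂).comp (continuous_id.prodMk continuous_id)).mul
          ((g_cont L₁).comp (continuous_id.prodMk continuous_const))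
      · exact ((g_cont L₁).comp (continuous_id.prodMk continuous_id)).mul
          ((g_cont L₂).comp (continuous_id.prodMk continuous_const))
    have hsubset : T ⊆ {a : EuclideanSpace ℝ (Fin n) |
        g L₂ a a * g L₁ a w = g L₁ a a * g L₂ a w} := fun a ha => hP a ha w
    exact (hCw.closure_subset_iff.2 hsubset) (hdense hu)
  -- Step 3: extend to all nonzero vectors by homogeneity
  have hPall : ∀ u : EuclideanSpace ℝ (Fin n), u ≠ 0 →
      ∀ w, g L₂ u u * g L₁ u w = g L₁ u u * g L₂ u w := by
    intro u hu w
    set a : ℝ := ‖u‖⁻¹ with ha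
    have ha0 : a ≠ 0 := inv_ne_zero (norm_ne_zero_iff.2 hu)
    have hmem : a • u ∈ Metric.sphere (0 : EuclideanSpace ℝ (Fin n)) 1 := by
      rw [mem_sphere_zero_iff_norm]
      exact norm_smul_inv_norm hu
    have h := hPsphere (a • u) hmem w
    simp only [g_smul_left, g_smul_right] at h
    have h3 : a^3 * (g L₂ u u * g L₁ u w) = a^3 * (g L₁ u u * g L₂ u w) := by
      linear_combination h
    exact mul_left_cancel₀ (pow_ne_zero 3 ha0) h3
  -- Step 4: the two quadratic forms are proportional
  obtain ⟨i⟩ : Nonempty (Fin n) := ⟨⟨0, hn⟩⟩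
  set e : EuclideanSpace ℝ (Fin n) := EuclideanSpace.single i (1:ℝ) with he
  have he0 : e ≠ 0 := by
    intro h0
    have : ‖e‖ = 1 := by rw [he, EuclideanSpace.norm_single]; norm_num
    rw [h0, norm_zero] at this
    norm_num at this
  set lam : ℝ := g L₁ e e / g L₂ e e with hlam
  have h2e : 0 < g L₂ e e := g_self_pos L₂ he0
  have h1e : 0 < g L₁ e e := g_self_pos L₁ he0
  have hlampos : 0 < lam := div_pos h1e h2e
  -- claim A
  have claimA : ∀ a b : EuclideanSpace ℝ (Fin n), a ≠ 0 → b ≠ 0 → g L₂ a b ≠ 0 →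
      g L₁ a a * g L₂ b b = g L₁ b b * g L₂ a a := by
    intro a b ha hb hab
    have h1 := hPall a ha b
    have h2 := hPall b hb a
    rw [g_symm L₁ b a, g_symm L₂ b a] at h2
    have h3 : (g L₁ a a * g L₂ b b) * g L₂ a b = (g L₁ b b * g L₂ a a) * g L₂ a b := by
      linear_combination g L₂ a a * h2 - g L₂ b b * h1
    exact mul_right_cancel₀ hab h3
  -- claim B
  have claimB : ∀ a b : EuclideanSpace ℝ (Fin n), a ≠ 0 → b ≠ 0 →
      g L₁ a a * g L₂ b b = g L₁ b b * g L₂ a a := by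
    intro a b ha hb
    by_cases hab : g L₂ a b ≠ 0
    · exact claimA a b ha hb hab
    · push_neg at hab
      have haa := ne_of_gt (g_self_pos L₂ ha)
      have hbb := ne_of_gt (g_self_pos L₂ hb)
      have hcne : a + b ≠ 0 := by
        intro h0
        have hb' : b = -a := by
          have := congrArg (fun x => x - a) h0
          simpa [add_sub_cancel_left] using this
        rw [hb', ← neg_one_smul ℝ a, g_smul_right] at hab
        apply haa
        linarith [hab]
      have hA1 : g L₂ a (a + b) ≠ 0 := by
        rw [g_add_right, hab, add_zero]; exact haa
      have hA2 : g L₂ b (a + b) ≠ 0 := by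
        rw [g_add_right, g_symm L₂ b a, hab, zero_add]; exact hbb
      have e1 := claimA a (a+b) ha hcne hA1
      have e2 := claimA b (a+b) hb hcne hA2
      have hcc := ne_of_gt (g_self_pos L₂ hcne)
      have h3 : (g L₁ a a * g L₂ b b) * g L₂ (a+b) (a+b)
          = (g L₁ b b * g L₂ a a) * g L₂ (a+b) (a+b) := by
        linear_combination g L₂ b b * e1 - g L₂ a a * e2
      exact mul_right_cancel₀ hcc h3
  have hprop : ∀ y : EuclideanSpace ℝ (Fin n), g L₁ y y = lam * g L₂ y y := by
    intro y
    by_cases hy : y = 0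
    · have : g L₁ y y = 0 := by rw [hy]; exact g_zero_right L₁ 0
      have h2 : g L₂ y y = 0 := by rw [hy]; exact g_zero_right L₂ 0
      rw [this, h2, mul_zero]
    · have := claimB y e hy he0
      rw [hlam]
      field_simp
      linarith [this]
  -- Step 5: conclude
  set s : ℝ := Real.sqrt lam with hs
  have hspos : 0 < s := Real.sqrt_pos.2 hlampos
  have hs2 : s^2 = lam := Real.sq_sqrt hlampos.le
  refine ⟨s⁻¹, inv_pos.2 hspos, ?_⟩
  ext y
  have hnorm : ‖L₁.symm y‖ = s * ‖L₂.symm y‖ := by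
    have h1 : ‖L₁.symm y‖^2 = (s * ‖L₂.symm y‖)^2 := by
      rw [mul_pow, ← g_self_eq, ← g_self_eq L₂, hprop y, hs2]
    rw [← Real.sqrt_sq (norm_nonneg (L₁.symm y)), h1,
      Real.sqrt_sq (by positivity)]
  rw [mem_smul_set_iff_inv_smul_mem₀ (inv_ne_zero (ne_of_gt hspos)), inv_inv,
    mem_ell, mem_ell, map_smul, norm_smul, Real.norm_eq_abs, abs_of_pos hspos,
    hnorm]
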